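/- Suppose the coordinates are connected (i ~ j for all i,j) and there exists at least one index that is strongly connected to every other index. Then there exists at least one connecting coordinate, i.e., an index a such that σ_{aj} is non-constant for every j ≠ a. -/
import Mathlib


/-- If the coordinates are connected and some index is strongly
connected to every other index, then there exists a connecting coordinate, i.e.
an index `a` such that `σ a j` is non-constant for every `j ≠ a`. -/
theorem exists_connecting_coordinate (n : ℕ) (hn : 3 ≤ n)
    (σ σ' : Fin n → Fin n → ℝ → ℝ)
    (hderiv : ∀ i j : Fin n, i ≠ j → ∀ x : ℝ, HasDerivAt (σ i j) (σ' i j x) x)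
    (hne : ∀ i j : Fin n, i ≠ j → ∀ s t : ℝ, σ i j s + σ j i t ≠ 0)
    (heq : ∀ i j k : Fin n, i ≠ j → j ≠ k → i ≠ k → ∀ s t u : ℝ,
      σ' j i t * σ' k i u * (σ j k t + σ k j u)
        - σ' j i t * σ' k j u * (σ k i u + σ i k s)
        - σ' k i u * σ' j k t * (σ i j s + σ j i t) = 0)
    (hconn : ∀ i j : Fin n,
      i = j ∨ ((∃ x, σ' i j x ≠ 0) ∨ (∃ x, σ' j i x ≠ 0)) ∨
        ∃ k, k ≠ i ∧ k ≠ j ∧ (∃ x, σ' k i x ≠ 0) ∧ (∃ x, σ' k j x ≠ 0))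
    (hS : ∃ i : Fin n, ∀ j : Fin n, j ≠ i →
      ((∃ x, σ' i j x ≠ 0) ∨ (∃ x, σ' j i x ≠ 0))) :
    ∃ a : Fin n, ∀ j : Fin n, j ≠ a → ∃ x, σ' a j x ≠ 0 := by
  classical
  obtain ⟨i, hi⟩ := hS
  -- Transitivity: N a b ∧ N b c ⇒ N a c
  have lemT : ∀ a b c : Fin n, a ≠ b → b ≠ c → a ≠ c →
      (∃ x, σ' a b x ≠ 0) → (∃ x, σ' b c x ≠ 0) → ∃ x, σ' a c x ≠ 0 := by
    intro a b c hab hbc hac ⟨u, hu⟩ ⟨t, ht⟩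
    by_contra h
    push_neg at h
    have H := heq c b a hbc.symm hab.symm hac.symm 0 t u
    rw [h u] at H
    have h3 : σ' b c t * σ' a b u * (σ a c u + σ c a 0) = 0 := by ring_nf at H ⊢; linarith
    exact mul_ne_zero (mul_ne_zero ht hu) (hne a c hac u 0) h3
  -- Comparison: N a c ∧ N b c ∧ ¬N b a ⇒ N a b
  have lemB : ∀ a b c : Fin n, a ≠ b → a ≠ c → b ≠ c →
      (∃ x, σ' a c x ≠ 0) → (∃ x, σ' b c x ≠ 0) → (∀ x, σ' b a x = 0) →
      ∃ x, σ' a b x ≠ 0 := by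
    intro a b c hab hac hbc ⟨t, ht⟩ ⟨u, hu⟩ hba
    by_contra h
    push_neg at h
    have H := heq c a b hac.symm hab hbc.symm 0 t u
    rw [hba u, h t] at H
    have h3 : σ' a c t * σ' b c u * (σ a b t + σ b a u) = 0 := by ring_nf at H ⊢; linarith
    exact mul_ne_zero (mul_ne_zero ht hu) (hne a b hab t u) h3
  -- counting function
  set f : Fin n → ℕ :=
    fun a => (Finset.univ.filter fun x => x ≠ a ∧ ∃ y, σ' a x y ≠ 0).card with hf
  have hmono : ∀ a b : Fin n, a ≠ b → (∃ x, σ' b a x ≠ 0) → (∀ x, σ' a b x = 0) →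
      f a < f b := by
    intro a b hab hba hab0
    apply Finset.card_lt_card
    constructor
    · intro x hx
      simp only [Finset.mem_filter, Finset.mem_univ, true_and] at hx ⊢
      obtain ⟨hxa, hax⟩ := hx
      have hxb : x ≠ b := by
        rintro rfl
        obtain ⟨y, hy⟩ := hax
        exact hy (hab0 y)
      exact ⟨hxb, lemT b a x (Ne.symm hab) (Ne.symm hxa) (Ne.symm hxb) hba hax⟩
    · intro hsub
      have ha : a ∈ Finset.univ.filter fun x => x ≠ b ∧ ∃ y, σ' b x y ≠ 0 := by
        simp only [Finset.mem_filter, Finset.mem_univ, true_and]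
        exact ⟨hab, hba⟩
      have := hsub ha
      simp at this
  obtain ⟨a, haP, hamax⟩ := Finset.exists_max_image
    (Finset.univ.filter fun j : Fin n => j = i ∨ ∃ x, σ' j i x ≠ 0) f
    ⟨i, by simp⟩
  have haP' : a = i ∨ ∃ x, σ' a i x ≠ 0 := by
    simpa using haP
  -- key consequence of maximality
  have key : ∀ b : Fin n, (b = i ∨ ∃ x, σ' b i x ≠ 0) → b ≠ a →
      (∃ x, σ' b a x ≠ 0) → ∃ x, σ' a b x ≠ 0 := by
    intro b hb hba hNba
    by_contra h
    push_neg at h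
    have h1 := hmono a b (Ne.symm hba) hNba h
    have h2 := hamax b (by simpa using hb)
    omega
  refine ⟨a, fun j hja => ?_⟩
  by_cases hai : a = i
  · subst hai
    rcases hi j hja with hNij | hNji
    · exact hNij
    · exact key j (Or.inr hNji) hja hNji
  · have hNai : ∃ x, σ' a i x ≠ 0 := haP'.resolve_left hai
    by_cases hji : j = i
    · subst hji; exact hNai
    · rcases hi j hji with hNij | hNji
      · exact lemT a i j hai (fun h => hji h.symm) (Ne.symm hja) hNai hNij
      · by_cases hNja : ∃ x, σ' j a x ≠ 0
        · exact key j (Or.inr hNji) hja hNja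
        · push_neg at hNja
          exact lemB a j i (Ne.symm hja) hai hji hNai hNji hNja
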